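/- Let m ≥ 6 and let A, c be the m×(m+1) Boolean system with unique ℕ-solution the all-ones vector (rows: x_i+x_{i+1}+x_{i+2}=3 for i<m, and x₁+x₂+x₄+x₇=4). Then A·x = c has a solution over the nonnegative rationals with at most m non-zero entries; in particular it has a nonnegative rational solution with at least one entry equal to zero. -/
import Mathlib

private lemma sum_ind_aux {n : ℕ} (b : Fin n → ℚ) (k : ℕ) (hk : k < n) :
    ∑ j : Fin n, (if (j : ℕ) = k then (1:ℚ) else 0) * b j = b ⟨k, hk⟩ := by
  rw [Finset.sum_eq_single (⟨k, hk⟩ : Fin n)]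
  · simp
  · intro j _ hj
    have : (j : ℕ) ≠ k := fun h => hj (Fin.ext h)
    simp [this]
  · simp

theorem rational_sparse_solution_of_tiling_system (m : ℕ) (hm : 6 ≤ m)
    (A : Matrix (Fin m) (Fin (m + 1)) ℚ)
    (hA : ∀ i j, A i j =
      if (i : ℕ) + 1 < m then
        (if (j : ℕ) = i ∨ (j : ℕ) = (i : ℕ) + 1 ∨ (j : ℕ) = (i : ℕ) + 2 then 1 else 0)
      else
        (if (j : ℕ) = 0 ∨ (j : ℕ) = 1 ∨ (j : ℕ) = 3 ∨ (j : ℕ) = 6 then 1 else 0))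
    (c : Fin m → ℚ)
    (hc : ∀ i, c i = if (i : ℕ) + 1 < m then 3 else 4) :
    ∃ b : Fin (m + 1) → ℚ, (∀ j, 0 ≤ b j) ∧ A.mulVec b = c ∧
      (Finset.univ.filter (fun j => b j ≠ 0)).card ≤ m ∧
      ∃ j, b j = 0 := by
  set b : Fin (m+1) → ℚ := fun j =>
    if (j : ℕ) % 3 = 0 then 1/2 else if (j : ℕ) % 3 = 1 then 5/2 else 0 with hb
  have h2 : (2 : ℕ) < m + 1 := by omega
  have hbz : b ⟨2, h2⟩ = 0 := by simp [hb]
  refine ⟨b, ?_, ?_, ?_, ⟨⟨2, h2⟩, hbz⟩⟩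
  · intro j
    simp only [hb]
    split_ifs <;> norm_num
  · funext i
    simp only [Matrix.mulVec, dotProduct, hA, hc]
    by_cases hi : (i : ℕ) + 1 < m
    · simp only [hi, if_true]
      have hsplit : ∀ j : Fin (m+1),
          (if (j : ℕ) = (i : ℕ) ∨ (j : ℕ) = (i : ℕ) + 1 ∨ (j : ℕ) = (i : ℕ) + 2 then (1:ℚ) else 0) * b j
          = (if (j : ℕ) = (i : ℕ) then (1:ℚ) else 0) * b j
            + (if (j : ℕ) = (i : ℕ) + 1 then (1:ℚ) else 0) * b j
            + (if (j : ℕ) = (i : ℕ) + 2 then (1:ℚ) else 0) * b j := by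
        intro j
        by_cases h0 : (j : ℕ) = (i : ℕ) <;> by_cases h1 : (j : ℕ) = (i : ℕ) + 1 <;>
          by_cases hh2 : (j : ℕ) = (i : ℕ) + 2 <;> simp [h0, h1, hh2] <;> omega
      rw [Finset.sum_congr rfl (fun j _ => hsplit j)]
      rw [Finset.sum_add_distrib, Finset.sum_add_distrib]
      have k0 : (i : ℕ) < m + 1 := by omega
      have k1 : (i : ℕ) + 1 < m + 1 := by omega
      have k2 : (i : ℕ) + 2 < m + 1 := by omega
      rw [sum_ind_aux b _ k0, sum_ind_aux b _ k1, sum_ind_aux b _ k2]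
      simp only [hb]
      have h3 : (i : ℕ) % 3 = 0 ∨ (i : ℕ) % 3 = 1 ∨ (i : ℕ) % 3 = 2 := by omega
      rcases h3 with h | h | h <;>
        · have e1 : ((i : ℕ) + 1) % 3 = ((i:ℕ)%3 + 1) % 3 := by omega
          have e2 : ((i : ℕ) + 2) % 3 = ((i:ℕ)%3 + 2) % 3 := by omega
          rw [e1, e2, h]
          norm_num
    · simp only [hi, if_false]
      have hsplit : ∀ j : Fin (m+1),
          (if (j : ℕ) = 0 ∨ (j : ℕ) = 1 ∨ (j : ℕ) = 3 ∨ (j : ℕ) = 6 then (1:ℚ) else 0) * b j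
          = (if (j : ℕ) = 0 then (1:ℚ) else 0) * b j
            + (if (j : ℕ) = 1 then (1:ℚ) else 0) * b j
            + (if (j : ℕ) = 3 then (1:ℚ) else 0) * b j
            + (if (j : ℕ) = 6 then (1:ℚ) else 0) * b j := by
        intro j
        by_cases h0 : (j : ℕ) = 0 <;> by_cases h1 : (j : ℕ) = 1 <;>
          by_cases h3 : (j : ℕ) = 3 <;> by_cases h6 : (j : ℕ) = 6 <;>
          simp [h0, h1, h3, h6] <;> omega
      rw [Finset.sum_congr rfl (fun j _ => hsplit j)]
      rw [Finset.sum_add_distrib, Finset.sum_add_distrib, Finset.sum_add_distrib]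
      have k0 : (0 : ℕ) < m + 1 := by omega
      have k1 : (1 : ℕ) < m + 1 := by omega
      have k3 : (3 : ℕ) < m + 1 := by omega
      have k6 : (6 : ℕ) < m + 1 := by omega
      rw [sum_ind_aux b _ k0, sum_ind_aux b _ k1, sum_ind_aux b _ k3, sum_ind_aux b _ k6]
      norm_num [hb]
  · have hsub : Finset.univ.filter (fun j => b j ≠ 0) ⊆
        Finset.univ.erase ⟨2, h2⟩ := by
      intro j hj
      simp only [Finset.mem_filter] at hj
      refine Finset.mem_erase.mpr ⟨?_, Finset.mem_univ _⟩
      rintro rfl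
      exact hj.2 hbz
    calc (Finset.univ.filter (fun j => b j ≠ 0)).card
        ≤ (Finset.univ.erase (⟨2, h2⟩ : Fin (m+1))).card := Finset.card_le_card hsub
      _ = m := by rw [Finset.card_erase_of_mem (Finset.mem_univ _)]; simp
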